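/- Let q ≥ 5 be an odd prime power and M_1 the incidence matrix of the strongly regular generalized partial geometry (P_1,C_1) from conics in PG(2,q). Then rank_2(M_1) = (q-1)^2, i.e., M_1 is invertible over F_2. -/

import Mathlib

set_option linter.unusedSectionVars false

open Matrix Finset

/-- (1,x,y) lies on the conic through e₁,e₂,e₃ with matrix !![0,a,b;a,0,1;b,1,0]. -/
abbrev onConic (F : Type) [Field F] (a b : F) (P : F × F) : Prop :=
  ![1, P.1, P.2] ⬝ᵥ (!![0, a, b; a, 0, 1; b, 1, 0] *ᵥ ![1, P.1, P.2]) = 0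


section ConicAux

variable {F : Type} [Field F] [Fintype F] [DecidableEq F]

private lemma zmod2_add_self (a : ZMod 2) : a + a = 0 := by fin_cases a <;> rfl

private lemma ite_one_mul_ite_one (p q : Prop) [Decidable p] [Decidable q] :
    (if p then (1 : ZMod 2) else 0) * (if q then 1 else 0) = if p ∧ q then 1 else 0 := by
  by_cases hp : p <;> by_cases hq : q <;> simp [hp, hq]

/-- Sum over the punctured-plane subtype of the indicator of a single value. -/
private lemma sum_pts_ite (v : F × F) :
    ∑ s : {p : F × F // p.1 ≠ 0 ∧ p.2 ≠ 0}, (if s.1 = v then (1 : ZMod 2) else 0)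
      = if v.1 ≠ 0 ∧ v.2 ≠ 0 then 1 else 0 := by
  rw [← Finset.sum_subtype (Finset.univ.filter fun p : F × F => p.1 ≠ 0 ∧ p.2 ≠ 0)
    (by simp) (fun p => if p = v then (1 : ZMod 2) else 0)]
  rw [Finset.sum_ite_eq' _ v]
  simp

/-- A fixed-point-free involution compatible with `f` kills the sum mod 2. -/
private lemma sum_pts_invol (f : {p : F × F // p.1 ≠ 0 ∧ p.2 ≠ 0} → ZMod 2)
    (g : {p : F × F // p.1 ≠ 0 ∧ p.2 ≠ 0} → {p : F × F // p.1 ≠ 0 ∧ p.2 ≠ 0})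
    (hinv : ∀ s, g (g s) = s) (hne : ∀ s, g s ≠ s) (hf : ∀ s, f (g s) = f s) :
    ∑ s : {p : F × F // p.1 ≠ 0 ∧ p.2 ≠ 0}, f s = 0 :=
  Finset.sum_ninvolution g (fun a => by rw [hf]; exact zmod2_add_self _)
    (fun a _ => hne a) (fun a => Finset.mem_univ _) hinv

end ConicAux

section ConicAux2

variable {F : Type} [Field F] [Fintype F] [DecidableEq F]

private lemma conic_neg_ne_self {x : F} (h2 : (2 : F) ≠ 0) (hx : x ≠ 0) : -x ≠ x := by
  intro h
  apply hx
  have : (2 : F) * x = 0 := by linear_combination -h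
  rcases mul_eq_zero.mp this with h' | h'
  · exact absurd h' h2
  · exact h'

/-- involution negating the second coordinate -/
private def negY (s : {p : F × F // p.1 ≠ 0 ∧ p.2 ≠ 0}) : {p : F × F // p.1 ≠ 0 ∧ p.2 ≠ 0} :=
  ⟨(s.1.1, -s.1.2), s.2.1, neg_ne_zero.mpr s.2.2⟩

private def negX (s : {p : F × F // p.1 ≠ 0 ∧ p.2 ≠ 0}) : {p : F × F // p.1 ≠ 0 ∧ p.2 ≠ 0} :=
  ⟨(-s.1.1, s.1.2), neg_ne_zero.mpr s.2.1, s.2.2⟩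

private def negB (s : {p : F × F // p.1 ≠ 0 ∧ p.2 ≠ 0}) : {p : F × F // p.1 ≠ 0 ∧ p.2 ≠ 0} :=
  ⟨(-s.1.1, -s.1.2), neg_ne_zero.mpr s.2.1, neg_ne_zero.mpr s.2.2⟩

private lemma negY_invol (s : {p : F × F // p.1 ≠ 0 ∧ p.2 ≠ 0}) : negY (negY s) = s := by
  simp [negY]
private lemma negX_invol (s : {p : F × F // p.1 ≠ 0 ∧ p.2 ≠ 0}) : negX (negX s) = s := by
  simp [negX]
private lemma negB_invol (s : {p : F × F // p.1 ≠ 0 ∧ p.2 ≠ 0}) : negB (negB s) = s := by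
  simp [negB]

private lemma negY_ne (h2 : (2 : F) ≠ 0) (s : {p : F × F // p.1 ≠ 0 ∧ p.2 ≠ 0}) :
    negY s ≠ s := by
  intro h
  exact conic_neg_ne_self h2 s.2.2 (congrArg (fun t => t.1.2) h)
private lemma negX_ne (h2 : (2 : F) ≠ 0) (s : {p : F × F // p.1 ≠ 0 ∧ p.2 ≠ 0}) :
    negX s ≠ s := by
  intro h
  exact conic_neg_ne_self h2 s.2.1 (congrArg (fun t => t.1.1) h)
private lemma negB_ne (h2 : (2 : F) ≠ 0) (s : {p : F × F // p.1 ≠ 0 ∧ p.2 ≠ 0}) :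
    negB s ≠ s := by
  intro h
  exact conic_neg_ne_self h2 s.2.1 (congrArg (fun t => t.1.1) h)

end ConicAux2

section ConicAux3

variable {F : Type} [Field F] [Fintype F] [DecidableEq F]

private lemma cast_odd_zmod2 {q : ℕ} (hodd : Odd q) : (q : ZMod 2) = 1 := by
  obtain ⟨k, rfl⟩ := hodd
  push_cast
  have : (2 : ZMod 2) = 0 := rfl
  rw [this]
  ring

/-- Convert a sum over the punctured-plane subtype into a double sum over `F`. -/
private lemma sum_pts_eq_double (f : F × F → ZMod 2) :
    ∑ s : {p : F × F // p.1 ≠ 0 ∧ p.2 ≠ 0}, f s.1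
      = ∑ a : F, ∑ b : F, if (a ≠ 0 ∧ b ≠ 0) then f (a, b) else 0 := by
  rw [← Finset.sum_subtype (Finset.univ.filter fun p : F × F => p.1 ≠ 0 ∧ p.2 ≠ 0)
    (by simp) f, Finset.sum_filter, Fintype.sum_prod_type]

private lemma sum_ite_const_eq {Q : Prop} [Decidable Q] (c : F) :
    (∑ b : F, if Q ∧ b = c then (1 : ZMod 2) else 0) = if Q then 1 else 0 := by
  by_cases hQ : Q <;> simp [hQ, Finset.sum_ite_eq']

private lemma diag_count {q : ℕ} (hq : Fintype.card F = q) (hodd : Odd q)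
    {x y : F} (hx : x ≠ 0) (hy : y ≠ 0) :
    ∑ ab : {p : F × F // p.1 ≠ 0 ∧ p.2 ≠ 0},
      (if ab.1.1 * x + ab.1.2 * y + x * y = 0 then (1 : ZMod 2) else 0) = 1 := by
  rw [sum_pts_eq_double (fun p => if p.1 * x + p.2 * y + x * y = 0 then (1 : ZMod 2) else 0)]
  have step1 : ∀ a : F, (∑ b : F, if (a ≠ 0 ∧ b ≠ 0) then
        (if a * x + b * y + x * y = 0 then (1 : ZMod 2) else 0) else 0)
      = if a ≠ 0 ∧ a ≠ -y then 1 else 0 := by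
    intro a
    have key : ∀ b : F, (if (a ≠ 0 ∧ b ≠ 0) then
        (if a * x + b * y + x * y = 0 then (1 : ZMod 2) else 0) else 0)
        = if (a ≠ 0 ∧ a ≠ -y) ∧ b = -(a * x + x * y) / y then 1 else 0 := by
      intro b
      have hb : a * x + b * y + x * y = 0 ↔ b = -(a * x + x * y) / y := by
        rw [eq_div_iff hy]
        constructor
        · intro h; linear_combination h
        · intro h; linear_combination h
      have hc : -(a * x + x * y) / y ≠ 0 ↔ a ≠ -y := by
        rw [div_ne_zero_iff]
        constructor
        · rintro ⟨h, -⟩ rfl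
          exact h (by ring)
        · intro h
          refine ⟨fun hh => h ?_, hy⟩
          have : x * (a + y) = 0 := by linear_combination -hh
          rcases mul_eq_zero.mp this with h' | h'
          · exact absurd h' hx
          · linear_combination h'
      by_cases h1 : a ≠ 0 ∧ b ≠ 0
      · rw [if_pos h1]
        by_cases h2 : a * x + b * y + x * y = 0
        · rw [if_pos h2, if_pos]
          refine ⟨⟨h1.1, ?_⟩, hb.mp h2⟩
          rw [← hc, ← hb.mp h2]; exact h1.2
        · rw [if_neg h2, if_neg]
          rintro ⟨-, hbc⟩
          exact h2 (hb.mpr hbc)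
      · rw [if_neg h1, eq_comm]
        rw [not_and_or, not_not, not_not] at h1
        rw [ite_eq_right_iff]
        rintro ⟨⟨ha, hay⟩, hbc⟩
        rcases h1 with rfl | rfl
        · exact absurd rfl ha
        · rw [← hc] at hay
          exact absurd hbc.symm (by simpa using hay)
    simp_rw [key]
    exact sum_ite_const_eq _
  simp_rw [step1]
  have key2 : ∀ a : F, (if a ≠ 0 ∧ a ≠ -y then (1 : ZMod 2) else 0)
      = 1 + (if a = 0 then 1 else 0) + (if a = -y then 1 else 0) := by
    intro a
    by_cases h0 : a = 0
    · subst h0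
      rw [if_neg (by simp), if_pos rfl, if_neg (by intro h; exact hy (by linear_combination h))]
      rfl
    · by_cases h1 : a = -y
      · rw [if_neg (by tauto), if_neg h0, if_pos h1]; rfl
      · rw [if_pos ⟨h0, h1⟩, if_neg h0, if_neg h1]; rfl
  simp_rw [key2]
  rw [Finset.sum_add_distrib, Finset.sum_add_distrib, Finset.sum_const,
    Finset.card_univ, hq, Finset.sum_ite_eq' _ (0:F), Finset.sum_ite_eq' _ (-y)]
  simp [nsmul_eq_mul, cast_odd_zmod2 hodd]
  rfl

end ConicAux3

section ConicAux4

variable {F : Type} [Field F] [Fintype F] [DecidableEq F]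

private lemma entry_count {q : ℕ} (hq : Fintype.card F = q) (hodd : Odd q)
    {x₁ y₁ x₂ y₂ : F} (hx₁ : x₁ ≠ 0) (hy₁ : y₁ ≠ 0) (hx₂ : x₂ ≠ 0) (hy₂ : y₂ ≠ 0) :
    ∑ ab : {p : F × F // p.1 ≠ 0 ∧ p.2 ≠ 0},
      (if ab.1.1 * x₁ + ab.1.2 * y₁ + x₁ * y₁ = 0 ∧
          ab.1.1 * x₂ + ab.1.2 * y₂ + x₂ * y₂ = 0 then (1 : ZMod 2) else 0)
      = 1 + (if x₁ = x₂ ∧ y₁ = y₂ then 1 else 0) + (if x₁ = x₂ then 1 else 0)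
        + (if y₁ = y₂ then 1 else 0) + (if x₁ * y₂ = x₂ * y₁ then 1 else 0) := by
  by_cases hx : x₁ = x₂
  · by_cases hy : y₁ = y₂
    · -- diagonal case
      subst hx; subst hy
      simp only [and_self]
      rw [diag_count hq hodd hx₁ hy₁]
      simp only [if_pos trivial, eq_self_iff_true, if_true, and_self]
      decide
    · -- same column, different rows: no common conic
      subst hx
      rw [Finset.sum_eq_zero, if_neg (by tauto), if_pos rfl, if_neg hy,
        if_neg (fun h => hy (mul_left_cancel₀ hx₁ h).symm)]
      · decide
      · rintro ⟨⟨a, b⟩, ha, hb⟩ -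
        show (if a * x₁ + b * y₁ + x₁ * y₁ = 0 ∧ a * x₁ + b * y₂ + x₁ * y₂ = 0
          then (1 : ZMod 2) else 0) = 0
        rw [if_neg]
        rintro ⟨e1, e2⟩
        apply ha
        show a = 0
        have hbx : (b + x₁) * (y₁ - y₂) = 0 := by linear_combination e1 - e2
        have hb1 : b = -x₁ := by
          rcases mul_eq_zero.mp hbx with h | h
          · linear_combination h
          · exact absurd (by linear_combination h) hy
        have : a * x₁ = 0 := by linear_combination e1 - y₁ * hb1
        rcases mul_eq_zero.mp this with h | h
        · exact h
        · exact absurd h hx₁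
  · by_cases hy : y₁ = y₂
    · subst hy
      rw [Finset.sum_eq_zero, if_neg (by tauto), if_neg hx, if_pos rfl,
        if_neg (fun h => hx (mul_right_cancel₀ hy₁ h))]
      · decide
      · rintro ⟨⟨a, b⟩, ha, hb⟩ -
        show (if a * x₁ + b * y₁ + x₁ * y₁ = 0 ∧ a * x₂ + b * y₁ + x₂ * y₁ = 0
          then (1 : ZMod 2) else 0) = 0
        rw [if_neg]
        rintro ⟨e1, e2⟩
        apply hb
        show b = 0
        have hax : (a + y₁) * (x₁ - x₂) = 0 := by linear_combination e1 - e2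
        have ha1 : a = -y₁ := by
          rcases mul_eq_zero.mp hax with h | h
          · linear_combination h
          · exact absurd (by linear_combination h) (sub_ne_zero.mpr hx)
        have : b * y₁ = 0 := by linear_combination e1 - x₁ * ha1
        rcases mul_eq_zero.mp this with h | h
        · exact h
        · exact absurd h hy₁
    · by_cases hD : x₁ * y₂ = x₂ * y₁
      · -- proportional points: no common conic
        rw [Finset.sum_eq_zero, if_neg (by tauto), if_neg hx, if_neg hy, if_pos hD]
        · decide
        · rintro ⟨⟨a, b⟩, ha, hb⟩ -
          show (if a * x₁ + b * y₁ + x₁ * y₁ = 0 ∧ a * x₂ + b * y₂ + x₂ * y₂ = 0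
            then (1 : ZMod 2) else 0) = 0
          rw [if_neg]
          rintro ⟨e1, e2⟩
          apply hx
          have h0 : y₁ * y₂ * (x₁ - x₂) = 0 := by
            linear_combination y₂ * e1 - y₁ * e2 - a * hD
          rcases mul_eq_zero.mp h0 with h | h
          · exact absurd h (mul_ne_zero hy₁ hy₂)
          · linear_combination h
      · -- generic case: exactly one common conic
        have hD' : x₁ * y₂ - x₂ * y₁ ≠ 0 := sub_ne_zero.mpr hD
        have key : ∀ ab : {p : F × F // p.1 ≠ 0 ∧ p.2 ≠ 0},
            (ab.1.1 * x₁ + ab.1.2 * y₁ + x₁ * y₁ = 0 ∧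
              ab.1.1 * x₂ + ab.1.2 * y₂ + x₂ * y₂ = 0)
            ↔ ab.1 = (y₁ * y₂ * (x₂ - x₁) / (x₁ * y₂ - x₂ * y₁),
                x₁ * x₂ * (y₁ - y₂) / (x₁ * y₂ - x₂ * y₁)) := by
          rintro ⟨⟨a, b⟩, ha, hb⟩
          show (a * x₁ + b * y₁ + x₁ * y₁ = 0 ∧ a * x₂ + b * y₂ + x₂ * y₂ = 0) ↔ _
          rw [Prod.ext_iff]
          constructor
          · rintro ⟨e1, e2⟩
            constructor
            · show a = _
              rw [eq_div_iff hD']; linear_combination y₂ * e1 - y₁ * e2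
            · show b = _
              rw [eq_div_iff hD']; linear_combination x₁ * e2 - x₂ * e1
          · rintro ⟨h1, h2⟩
            rw [show a = y₁ * y₂ * (x₂ - x₁) / (x₁ * y₂ - x₂ * y₁) from h1,
              show b = x₁ * x₂ * (y₁ - y₂) / (x₁ * y₂ - x₂ * y₁) from h2]
            constructor
            · rw [div_mul_eq_mul_div, div_mul_eq_mul_div, ← add_div, div_add' _ _ _ hD',
                div_eq_zero_iff]
              left; ring
            · rw [div_mul_eq_mul_div, div_mul_eq_mul_div, ← add_div, div_add' _ _ _ hD',
                div_eq_zero_iff]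
              left; ring
        rw [Finset.sum_congr rfl (fun ab _ => if_congr (key ab) rfl rfl),
          sum_pts_ite _]
        have ha0 : y₁ * y₂ * (x₂ - x₁) / (x₁ * y₂ - x₂ * y₁) ≠ 0 :=
          div_ne_zero (mul_ne_zero (mul_ne_zero hy₁ hy₂)
            (sub_ne_zero.mpr fun h => hx h.symm)) hD'
        have hb0 : x₁ * x₂ * (y₁ - y₂) / (x₁ * y₂ - x₂ * y₁) ≠ 0 :=
          div_ne_zero (mul_ne_zero (mul_ne_zero hx₁ hx₂) (sub_ne_zero.mpr hy)) hD'
        rw [if_pos ⟨ha0, hb0⟩, if_neg (by tauto), if_neg hx, if_neg hy, if_neg hD]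
        decide

end ConicAux4

section ConicAux5

variable (F : Type) [Field F] [Fintype F] [DecidableEq F]

private def Jm : Matrix {p : F × F // p.1 ≠ 0 ∧ p.2 ≠ 0} {p : F × F // p.1 ≠ 0 ∧ p.2 ≠ 0} (ZMod 2) :=
  Matrix.of fun _ _ => 1
private def Rm : Matrix {p : F × F // p.1 ≠ 0 ∧ p.2 ≠ 0} {p : F × F // p.1 ≠ 0 ∧ p.2 ≠ 0} (ZMod 2) :=
  Matrix.of fun P Q => if P.1.1 = Q.1.1 then 1 else 0
private def Cm : Matrix {p : F × F // p.1 ≠ 0 ∧ p.2 ≠ 0} {p : F × F // p.1 ≠ 0 ∧ p.2 ≠ 0} (ZMod 2) :=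
  Matrix.of fun P Q => if P.1.2 = Q.1.2 then 1 else 0
private def Lm : Matrix {p : F × F // p.1 ≠ 0 ∧ p.2 ≠ 0} {p : F × F // p.1 ≠ 0 ∧ p.2 ≠ 0} (ZMod 2) :=
  Matrix.of fun P Q => if P.1.1 * Q.1.2 = Q.1.1 * P.1.2 then 1 else 0

variable {F}

private lemma prod_entry_eq_one {cond : {p : F × F // p.1 ≠ 0 ∧ p.2 ≠ 0} → Prop}
    [DecidablePred cond] (v : F × F) (hv1 : v.1 ≠ 0) (hv2 : v.2 ≠ 0)
    (h : ∀ s, cond s ↔ s.1 = v) :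
    ∑ s : {p : F × F // p.1 ≠ 0 ∧ p.2 ≠ 0}, (if cond s then (1 : ZMod 2) else 0) = 1 := by
  rw [Finset.sum_congr rfl fun s _ => if_congr (h s) rfl rfl, sum_pts_ite, if_pos ⟨hv1, hv2⟩]

-- zero products, via fixed-point-free involutions
private lemma JJ (h2 : (2:F) ≠ 0) : Jm F * Jm F = 0 := by
  ext P Q
  rw [mul_apply, Matrix.zero_apply]
  exact sum_pts_invol _ negY negY_invol (negY_ne h2) (fun s => rfl)

private lemma RR (h2 : (2:F) ≠ 0) : Rm F * Rm F = 0 := by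
  ext P Q
  rw [mul_apply, Matrix.zero_apply]
  exact sum_pts_invol _ negY negY_invol (negY_ne h2) (fun s => rfl)

private lemma CC (h2 : (2:F) ≠ 0) : Cm F * Cm F = 0 := by
  ext P Q
  rw [mul_apply, Matrix.zero_apply]
  exact sum_pts_invol _ negX negX_invol (negX_ne h2) (fun s => rfl)

private lemma JR (h2 : (2:F) ≠ 0) : Jm F * Rm F = 0 := by
  ext P Q
  rw [mul_apply, Matrix.zero_apply]
  exact sum_pts_invol _ negY negY_invol (negY_ne h2) (fun s => rfl)

private lemma RJ (h2 : (2:F) ≠ 0) : Rm F * Jm F = 0 := by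
  ext P Q
  rw [mul_apply, Matrix.zero_apply]
  exact sum_pts_invol _ negY negY_invol (negY_ne h2) (fun s => rfl)

private lemma JC (h2 : (2:F) ≠ 0) : Jm F * Cm F = 0 := by
  ext P Q
  rw [mul_apply, Matrix.zero_apply]
  exact sum_pts_invol _ negX negX_invol (negX_ne h2) (fun s => rfl)

private lemma CJ (h2 : (2:F) ≠ 0) : Cm F * Jm F = 0 := by
  ext P Q
  rw [mul_apply, Matrix.zero_apply]
  exact sum_pts_invol _ negX negX_invol (negX_ne h2) (fun s => rfl)

private lemma LL (h2 : (2:F) ≠ 0) : Lm F * Lm F = 0 := by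
  ext P Q
  rw [mul_apply, Matrix.zero_apply]
  refine sum_pts_invol _ negB negB_invol (negB_ne h2) (fun s => ?_)
  simp only [Lm, negB, Matrix.of_apply, mul_neg, neg_mul, neg_inj]

private lemma JL (h2 : (2:F) ≠ 0) : Jm F * Lm F = 0 := by
  ext P Q
  rw [mul_apply, Matrix.zero_apply]
  refine sum_pts_invol _ negB negB_invol (negB_ne h2) (fun s => ?_)
  simp only [Jm, Lm, negB, Matrix.of_apply, mul_neg, neg_mul, neg_inj]

private lemma LJ (h2 : (2:F) ≠ 0) : Lm F * Jm F = 0 := by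
  ext P Q
  rw [mul_apply, Matrix.zero_apply]
  refine sum_pts_invol _ negB negB_invol (negB_ne h2) (fun s => ?_)
  simp only [Jm, Lm, negB, Matrix.of_apply, mul_neg, neg_mul, neg_inj]

-- products equal to J
private lemma RC : Rm F * Cm F = Jm F := by
  ext P Q
  rw [mul_apply]
  show _ = 1
  simp only [Rm, Cm, Matrix.of_apply]
  simp_rw [ite_one_mul_ite_one]
  refine prod_entry_eq_one (P.1.1, Q.1.2) P.2.1 Q.2.2 (fun s => ?_)
  rw [Prod.ext_iff]
  exact and_congr eq_comm Iff.rfl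

private lemma CR : Cm F * Rm F = Jm F := by
  ext P Q
  rw [mul_apply]
  show _ = 1
  simp only [Rm, Cm, Matrix.of_apply]
  simp_rw [ite_one_mul_ite_one]
  refine prod_entry_eq_one (Q.1.1, P.1.2) Q.2.1 P.2.2 (fun s => ?_)
  rw [Prod.ext_iff]
  exact and_congr eq_comm Iff.rfl |>.trans and_comm

private lemma RL : Rm F * Lm F = Jm F := by
  ext P Q
  rw [mul_apply]
  show _ = 1
  simp only [Rm, Lm, Matrix.of_apply]
  simp_rw [ite_one_mul_ite_one]
  refine prod_entry_eq_one (P.1.1, P.1.1 * Q.1.2 / Q.1.1) P.2.1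
    (div_ne_zero (mul_ne_zero P.2.1 Q.2.2) Q.2.1) (fun s => ?_)
  rw [Prod.ext_iff]
  constructor
  · rintro ⟨h1, h2⟩
    refine ⟨h1.symm, ?_⟩
    rw [eq_div_iff Q.2.1]
    rw [← h1] at h2
    linear_combination -h2
  · rintro ⟨h1, h2⟩
    refine ⟨h1.symm, ?_⟩
    rw [h1, h2]
    rw [← mul_div_assoc, mul_div_cancel_left₀ _ Q.2.1]

private lemma LR : Lm F * Rm F = Jm F := by
  ext P Q
  rw [mul_apply]
  show _ = 1
  simp only [Rm, Lm, Matrix.of_apply]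
  simp_rw [ite_one_mul_ite_one]
  refine prod_entry_eq_one (Q.1.1, Q.1.1 * P.1.2 / P.1.1) Q.2.1
    (div_ne_zero (mul_ne_zero Q.2.1 P.2.2) P.2.1) (fun s => ?_)
  rw [Prod.ext_iff]
  constructor
  · rintro ⟨h1, h2⟩
    refine ⟨h2, ?_⟩
    rw [eq_div_iff P.2.1]
    rw [h2] at h1
    linear_combination h1
  · rintro ⟨h1, h2⟩
    refine ⟨?_, h1⟩
    rw [h1, h2]
    rw [← mul_div_assoc, mul_div_cancel_left₀ _ P.2.1]

private lemma CL : Cm F * Lm F = Jm F := by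
  ext P Q
  rw [mul_apply]
  show _ = 1
  simp only [Cm, Lm, Matrix.of_apply]
  simp_rw [ite_one_mul_ite_one]
  refine prod_entry_eq_one (Q.1.1 * P.1.2 / Q.1.2, P.1.2)
    (div_ne_zero (mul_ne_zero Q.2.1 P.2.2) Q.2.2) P.2.2 (fun s => ?_)
  rw [Prod.ext_iff]
  constructor
  · rintro ⟨h1, h2⟩
    refine ⟨?_, h1.symm⟩
    rw [eq_div_iff Q.2.2]
    rw [← h1] at h2
    linear_combination h2
  · rintro ⟨h1, h2⟩
    refine ⟨h2.symm, ?_⟩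
    rw [h1, h2]
    rw [div_mul_cancel₀ _ Q.2.2]

private lemma LC : Lm F * Cm F = Jm F := by
  ext P Q
  rw [mul_apply]
  show _ = 1
  simp only [Cm, Lm, Matrix.of_apply]
  simp_rw [ite_one_mul_ite_one]
  refine prod_entry_eq_one (P.1.1 * Q.1.2 / P.1.2, Q.1.2)
    (div_ne_zero (mul_ne_zero P.2.1 Q.2.2) P.2.2) Q.2.2 (fun s => ?_)
  rw [Prod.ext_iff]
  constructor
  · rintro ⟨h1, h2⟩
    refine ⟨?_, h2⟩
    rw [eq_div_iff P.2.2]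
    rw [h2] at h1
    linear_combination -h1
  · rintro ⟨h1, h2⟩
    refine ⟨?_, h2⟩
    rw [h1, h2]
    rw [div_mul_cancel₀ _ P.2.2]

end ConicAux5

section ConicAux6

variable {F : Type} [Field F] [Fintype F] [DecidableEq F]

private lemma mat_add_self (X : Matrix {p : F × F // p.1 ≠ 0 ∧ p.2 ≠ 0}
    {p : F × F // p.1 ≠ 0 ∧ p.2 ≠ 0} (ZMod 2)) : X + X = 0 := by
  ext P Q
  exact zmod2_add_self _

private lemma NN_eq_one (h2 : (2:F) ≠ 0) :
    (1 + Jm F + Rm F + Cm F + Lm F) * (1 + Jm F + Rm F + Cm F + Lm F) = 1 := by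
  have hK : (Jm F + Rm F + Cm F + Lm F) * (Jm F + Rm F + Cm F + Lm F) = 0 := by
    simp only [add_mul, mul_add, JJ h2, JR h2, JC h2, JL h2, RJ h2, RR h2, RC, RL,
      CJ h2, CR, CC h2, CL, LJ h2, LR, LC, LL h2]
    ext P Q
    simp [Jm, Matrix.add_apply, Matrix.zero_apply, Matrix.of_apply]
    all_goals decide
  have hN : (1 : Matrix _ _ (ZMod 2)) + Jm F + Rm F + Cm F + Lm F
      = 1 + (Jm F + Rm F + Cm F + Lm F) := by abel
  rw [hN, add_mul, one_mul, mul_add, mul_one, hK, add_zero, add_assoc,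
    mat_add_self, add_zero]

private lemma step1 {q : ℕ} (hq : Fintype.card F = q) (hodd : Odd q) :
    (Matrix.of fun (P ab : {p : F × F // p.1 ≠ 0 ∧ p.2 ≠ 0}) =>
        if ab.1.1 * P.1.1 + ab.1.2 * P.1.2 + P.1.1 * P.1.2 = 0 then (1 : ZMod 2) else 0)
      * (Matrix.of fun (P ab : {p : F × F // p.1 ≠ 0 ∧ p.2 ≠ 0}) =>
        if ab.1.1 * P.1.1 + ab.1.2 * P.1.2 + P.1.1 * P.1.2 = 0 then (1 : ZMod 2) else 0)ᵀ
      = 1 + Jm F + Rm F + Cm F + Lm F := by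
  ext P Q
  rw [mul_apply]
  simp only [transpose_apply, Matrix.of_apply]
  simp_rw [ite_one_mul_ite_one]
  rw [entry_count hq hodd P.2.1 P.2.2 Q.2.1 Q.2.2]
  simp only [Matrix.add_apply, Matrix.one_apply, Jm, Rm, Cm, Lm, Matrix.of_apply]
  rw [show (if P = Q then (1:ZMod 2) else 0)
      = if (P.1.1 = Q.1.1 ∧ P.1.2 = Q.1.2) then 1 else 0 from
    if_congr (by rw [Subtype.ext_iff, Prod.ext_iff]) rfl rfl]
  ring

end ConicAux6

section ConicFinal

variable {F : Type} [Field F] [Fintype F] [DecidableEq F]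

private lemma onConic_iff (h2 : (2:F) ≠ 0) (a b : F) (P : F × F) :
    onConic F a b P ↔ a * P.1 + b * P.2 + P.1 * P.2 = 0 := by
  have e : ![1, P.1, P.2] ⬝ᵥ (!![0, a, b; a, 0, 1; b, 1, 0] *ᵥ ![1, P.1, P.2])
      = 2 * (a * P.1 + b * P.2 + P.1 * P.2) := by
    simp [Matrix.mulVec, dotProduct, Fin.sum_univ_three]
    ring
  rw [onConic, e, mul_eq_zero]
  simp [h2]

end ConicFinal

/-- The 2-rank of the incidence matrix M₁ of the strongly regular generalized partial
geometry (𝒫₁,𝒞₁) from conics in PG(2,q) is (q-1)², i.e. M₁ is invertible over F₂. -/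
theorem stmt_17 (F : Type) [Field F] [Fintype F] [DecidableEq F] (q : ℕ)
    (hq : Fintype.card F = q) (hodd : Odd q) (hq5 : 5 ≤ q) :
    (Matrix.of (fun (P : {p : F × F // p.1 ≠ 0 ∧ p.2 ≠ 0})
        (ab : {p : F × F // p.1 ≠ 0 ∧ p.2 ≠ 0}) =>
      if onConic F ab.1.1 ab.1.2 P.1 then (1 : ZMod 2) else 0)).rank
      = (q - 1) ^ 2 := by
  have hchar : ringChar F ≠ 2 := by
    intro h
    have he := FiniteField.even_card_of_char_two h
    rw [hq] at he
    rcases hodd with ⟨k, hk⟩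
    omega
  have h2 : (2:F) ≠ 0 := by
    intro h0
    apply hchar
    have hd : ringChar F ∣ 2 := ringChar.dvd (by exact_mod_cast h0)
    rcases (Nat.dvd_prime Nat.prime_two).mp hd with h1 | h1
    · exact absurd h1 (CharP.char_ne_one F (ringChar F))
    · exact h1
  have hM : (Matrix.of (fun (P : {p : F × F // p.1 ≠ 0 ∧ p.2 ≠ 0})
        (ab : {p : F × F // p.1 ≠ 0 ∧ p.2 ≠ 0}) =>
      if onConic F ab.1.1 ab.1.2 P.1 then (1 : ZMod 2) else 0))
      = (Matrix.of fun (P ab : {p : F × F // p.1 ≠ 0 ∧ p.2 ≠ 0}) =>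
        if ab.1.1 * P.1.1 + ab.1.2 * P.1.2 + P.1.1 * P.1.2 = 0 then (1 : ZMod 2) else 0) := by
    ext P ab
    simp only [Matrix.of_apply]
    exact if_congr (onConic_iff h2 ab.1.1 ab.1.2 P.1) rfl rfl
  rw [hM]
  have hunit : IsUnit (Matrix.of fun (P ab : {p : F × F // p.1 ≠ 0 ∧ p.2 ≠ 0}) =>
      if ab.1.1 * P.1.1 + ab.1.2 * P.1.2 + P.1.1 * P.1.2 = 0 then (1 : ZMod 2) else 0) := by
    refine (Matrix.isUnit_iff_isUnit_det _).mpr (Matrix.isUnit_det_of_right_inverse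
      (B := (Matrix.of fun (P ab : {p : F × F // p.1 ≠ 0 ∧ p.2 ≠ 0}) =>
        if ab.1.1 * P.1.1 + ab.1.2 * P.1.2 + P.1.1 * P.1.2 = 0 then (1 : ZMod 2) else 0)ᵀ
        * (1 + Jm F + Rm F + Cm F + Lm F)) ?_)
    rw [← Matrix.mul_assoc, step1 hq hodd, NN_eq_one h2]
  rw [Matrix.rank_of_isUnit _ hunit]
  have h1 : Fintype.card {x : F // x ≠ 0} = q - 1 := by
    have hc := Fintype.card_subtype_compl (fun x : F => x = 0)
    rw [Fintype.card_subtype_eq (0:F), hq] at hc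
    exact hc
  rw [Fintype.card_congr (Equiv.subtypeProdEquivProd
    (p := fun x : F => x ≠ 0) (q := fun y : F => y ≠ 0)), Fintype.card_prod, h1, sq]
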